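/- Let X be a nonempty finite partially ordered set whose comparability graph G is connected and let R be a ring. Then the fractional automorphisms of I(X,R) form a subgroup of the group of ring automorphisms of I(X,R), and this subgroup is isomorphic as a group to the direct product of |X| − 1 copies of the group of invertible central elements of R (note that for a connected graph, the number of edges minus the cyclomatic number equals the number of vertices minus 1). -/

import Mathlib

/-- A ring automorphism of the incidence algebra is *multiplicative* if it fixes every
function supported on the diagonal and maps functions vanishing on the diagonal to
functions vanishing on the diagonal. -/
def IsMultAut {X R : Type*} [Preorder X] [LocallyFiniteOrder X] [DecidableEq X] [Ring R]
    (φ : RingAut (IncidenceAlgebra R X)) : Prop :=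
  (∀ f : IncidenceAlgebra R X, (∀ x y : X, x ≠ y → f x y = 0) → φ f = f) ∧
  (∀ f : IncidenceAlgebra R X, (∀ x : X, f x x = 0) → ∀ x : X, (φ f) x x = 0)

/-- An automorphism of the incidence algebra is a *fractional automorphism* if it is the
inner automorphism given by a diagonal unit whose diagonal entries are invertible central
elements of `R`. -/
def IsFracAut {X R : Type*} [Preorder X] [LocallyFiniteOrder X] [DecidableEq X] [Ring R]
    (φ : RingAut (IncidenceAlgebra R X)) : Prop :=
  ∃ (v : X → R) (d : (IncidenceAlgebra R X)ˣ),
    (∀ x : X, v x ∈ Set.center R ∧ IsUnit (v x)) ∧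
    (∀ x : X, (d : IncidenceAlgebra R X) x x = v x) ∧
    (∀ x y : X, x ≠ y → (d : IncidenceAlgebra R X) x y = 0) ∧
    (∀ f : IncidenceAlgebra R X, φ f = ↑d⁻¹ * f * ↑d)

/-- The comparability graph of a partially ordered set: `x` and `y` are adjacent iff
they are distinct and comparable. -/
def compGraph (X : Type*) [PartialOrder X] : SimpleGraph X where
  Adj x y := x < y ∨ y < x
  symm := ⟨fun _ _ (h : _ ∨ _) => h.symm⟩
  loopless := ⟨fun x (h : _ ∨ _) => h.elim (lt_irrefl x) (lt_irrefl x)⟩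

set_option linter.unusedSectionVars false
set_option maxHeartbeats 1000000

def conjRingAut {A : Type*} [Ring A] : Aˣ →* RingAut A :=
  (MulSemiringAction.toRingAut (ConjAct Aˣ) A).comp ConjAct.toConjAct.toMonoidHom

lemma conjRingAut_apply {A : Type*} [Ring A] (u : Aˣ) (a : A) :
    conjRingAut u a = ↑u * a * ↑u⁻¹ := rfl

section IA
variable {X R : Type*} [PartialOrder X] [LocallyFiniteOrder X] [DecidableEq X] [Ring R]

def diagIA (u : X → R) : IncidenceAlgebra R X :=
  ⟨fun x y => if x = y then u x else 0, fun a b hab => by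
    rw [if_neg]; rintro rfl; exact hab le_rfl⟩

@[simp] lemma diagIA_apply (u : X → R) (x y : X) :
    diagIA u x y = if x = y then u x else 0 := rfl

lemma diag_mul_apply (u : X → R) (f : IncidenceAlgebra R X) (x y : X) :
    (diagIA u * f) x y = u x * f x y := by
  rw [IncidenceAlgebra.mul_apply]
  by_cases hxy : x ≤ y
  · rw [Finset.sum_eq_single x]
    · simp
    · intro z hz hzx; simp [Ne.symm hzx]
    · intro h; exact absurd (Finset.mem_Icc.2 ⟨le_rfl, hxy⟩) h
  · rw [Finset.Icc_eq_empty hxy, Finset.sum_empty,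
      IncidenceAlgebra.apply_eq_zero_of_not_le hxy, mul_zero]

lemma mul_diag_apply (u : X → R) (f : IncidenceAlgebra R X) (x y : X) :
    (f * diagIA u) x y = f x y * u y := by
  rw [IncidenceAlgebra.mul_apply]
  by_cases hxy : x ≤ y
  · rw [Finset.sum_eq_single y]
    · simp
    · intro z hz hzy; simp [hzy]
    · intro h; exact absurd (Finset.mem_Icc.2 ⟨hxy, le_rfl⟩) h
  · rw [Finset.Icc_eq_empty hxy, Finset.sum_empty,
      IncidenceAlgebra.apply_eq_zero_of_not_le hxy, zero_mul]

def diagHom : (X → R) →* IncidenceAlgebra R X where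
  toFun := diagIA
  map_one' := by ext x y h; by_cases hxy : x = y <;> simp [hxy]
  map_mul' := fun u v => by
    ext x y h
    rw [diag_mul_apply]
    by_cases hxy : x = y <;> simp [hxy]

def piUnit : (X → (Subring.center R)ˣ) →* (X → R)ˣ where
  toFun v :=
    { val := fun x => ((v x : Subring.center R) : R)
      inv := fun x => (((v x)⁻¹ : (Subring.center R)ˣ) : Subring.center R)
      val_inv := funext fun x => by
        rw [Pi.mul_apply, Pi.one_apply, ← MulMemClass.coe_mul, Units.mul_inv, OneMemClass.coe_one]
      inv_val := funext fun x => by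
        rw [Pi.mul_apply, Pi.one_apply, ← MulMemClass.coe_mul, Units.inv_mul, OneMemClass.coe_one] }
  map_one' := by ext x; simp
  map_mul' := fun u v => by ext x; simp

def fracHom : (X → (Subring.center R)ˣ) →* RingAut (IncidenceAlgebra R X) :=
  conjRingAut.comp ((Units.map diagHom).comp piUnit)

lemma fracHom_apply (v : X → (Subring.center R)ˣ) (f : IncidenceAlgebra R X) (x y : X) :
    (fracHom v f) x y
      = ((v x : Subring.center R) : R) * f x y
        * ((((v y)⁻¹ : (Subring.center R)ˣ) : Subring.center R) : R) := by
  show (conjRingAut (Units.map diagHom (piUnit v)) f) x y = _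
  rw [conjRingAut_apply]
  have h1 : ((Units.map diagHom (piUnit v) : (IncidenceAlgebra R X)ˣ) : IncidenceAlgebra R X)
      = diagIA (fun x => ((v x : Subring.center R) : R)) := rfl
  have h2 : (((Units.map diagHom (piUnit v))⁻¹ : (IncidenceAlgebra R X)ˣ) : IncidenceAlgebra R X)
      = diagIA (fun x => ((((v x)⁻¹ : (Subring.center R)ˣ) : Subring.center R) : R)) := rfl
  rw [h1, h2, mul_diag_apply, diag_mul_apply]

lemma center_coe_comm (c : Subring.center R) (r : R) : r * (c : R) = (c : R) * r :=
  Subring.mem_center_iff.1 c.2 r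

lemma fracHom_const (c : (Subring.center R)ˣ) : fracHom (fun _ : X => c) = 1 := by
  refine RingEquiv.ext fun f => ?_
  ext x y h
  rw [fracHom_apply]
  rw [center_coe_comm, ← mul_assoc, ← MulMemClass.coe_mul, Units.inv_mul, OneMemClass.coe_one,
    one_mul]
  rfl

/-- The indicator of a single pair `x ≤ y`. -/
def singleIA {x y : X} (hxy : x ≤ y) : IncidenceAlgebra R X :=
  ⟨fun a b => if a = x ∧ b = y then 1 else 0, fun a b hab => by
    rw [if_neg]; rintro ⟨rfl, rfl⟩; exact hab hxy⟩

lemma fracHom_eq_one_edge {v : X → (Subring.center R)ˣ} (h : fracHom v = 1)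
    {x y : X} (hxy : x ≤ y) : v x = v y := by
  have h1 := congrArg (fun φ : RingAut (IncidenceAlgebra R X) => (φ (singleIA hxy)) x y) h
  rw [fracHom_apply] at h1
  have h2 : (singleIA hxy : IncidenceAlgebra R X) x y = 1 := by
    show (if x = x ∧ y = y then (1 : R) else 0) = 1
    simp
  have h3 : ((1 : RingAut (IncidenceAlgebra R X)) (singleIA hxy)) x y = 1 := h2
  rw [h3, h2, mul_one] at h1
  have h4 : ((v x * (v y)⁻¹ : (Subring.center R)ˣ) : Subring.center R) = 1 := Subtype.ext h1
  have h5 : v x * (v y)⁻¹ = 1 := Units.ext h4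
  exact mul_inv_eq_one.1 h5

/-- A unit of the center of `R` built from a central invertible element. -/
noncomputable def centerUnit {v : R} (hc : v ∈ Set.center R) (hu : IsUnit v) :
    (Subring.center R)ˣ where
  val := ⟨v, Subring.mem_center_iff.2 fun g => (hc.comm g).symm⟩
  inv := ⟨(↑hu.unit⁻¹ : R), Subring.mem_center_iff.2 fun g => by
    have key : (↑hu.unit : R) * (g * ↑hu.unit⁻¹) = ↑hu.unit * (↑hu.unit⁻¹ * g) := by
      calc (↑hu.unit : R) * (g * ↑hu.unit⁻¹) = v * g * ↑hu.unit⁻¹ := by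
            rw [hu.unit_spec, mul_assoc]
        _ = g * v * ↑hu.unit⁻¹ := by rw [hc.comm g]
        _ = g * (v * ↑hu.unit⁻¹) := mul_assoc _ _ _
        _ = g := by rw [hu.mul_val_inv, mul_one]
        _ = ↑hu.unit * (↑hu.unit⁻¹ * g) := by rw [← mul_assoc, Units.mul_inv, one_mul]
    exact (Units.mul_right_inj hu.unit).1 key⟩
  val_inv := Subtype.ext (by
    show v * (↑hu.unit⁻¹ : R) = 1
    exact hu.mul_val_inv)
  inv_val := Subtype.ext (by
    show (↑hu.unit⁻¹ : R) * v = 1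
    exact hu.val_inv_mul)

@[simp] lemma centerUnit_val {v : R} (hc : v ∈ Set.center R) (hu : IsUnit v) :
    ((centerUnit hc hu : Subring.center R) : R) = v := rfl

end IA

section IA2
variable {X R : Type*} [PartialOrder X] [LocallyFiniteOrder X] [DecidableEq X] [Ring R]

lemma coe_center_mem (c : Subring.center R) : (c : R) ∈ Set.center R :=
  Semigroup.mem_center_iff.2 fun g => center_coe_comm c g

lemma fracHom_isFracAut (v : X → (Subring.center R)ˣ) : IsFracAut (fracHom v) := by
  refine ⟨fun x => ((((v x)⁻¹ : (Subring.center R)ˣ) : Subring.center R) : R),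
    (Units.map diagHom (piUnit v))⁻¹, fun x => ⟨coe_center_mem _, ?_⟩, fun x => ?_, fun x y h => ?_, fun f => ?_⟩
  · exact ((v x)⁻¹).isUnit.map (Subring.center R).subtype
  · show diagIA (fun x => ((((v x)⁻¹ : (Subring.center R)ˣ) : Subring.center R) : R)) x x = _
    simp
  · show diagIA (fun x => ((((v x)⁻¹ : (Subring.center R)ˣ) : Subring.center R) : R)) x y = 0
    simp [h]
  · rw [inv_inv]
    rfl

lemma isFracAut_iff (φ : RingAut (IncidenceAlgebra R X)) :
    IsFracAut φ ↔ ∃ v : X → (Subring.center R)ˣ, fracHom v = φ := by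
  constructor
  · rintro ⟨v, d, hcu, hdiag, hoff, hconj⟩
    set U : X → (Subring.center R)ˣ := fun x => centerUnit (hcu x).1 (hcu x).2 with hU
    have hd : (d : IncidenceAlgebra R X) = diagIA v := by
      ext a b hab
      by_cases h : a = b
      · subst h; simp [hdiag a]
      · simp [hoff a b h, h]
    set w : X → R := fun x => (↑((hcu x).2).unit⁻¹ : R) with hw
    have hinvmul : diagIA w * (d : IncidenceAlgebra R X) = 1 := by
      rw [hd]
      have : diagIA w * diagIA v = diagIA (w * v) := (diagHom.map_mul w v).symm
      rw [this]
      have : w * v = 1 := funext fun x => ((hcu x).2).val_inv_mul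
      rw [this]
      exact diagHom.map_one
    have hdinv : ((d⁻¹ : (IncidenceAlgebra R X)ˣ) : IncidenceAlgebra R X) = diagIA w := by
      calc ((d⁻¹ : (IncidenceAlgebra R X)ˣ) : IncidenceAlgebra R X)
          = 1 * ↑d⁻¹ := (one_mul _).symm
        _ = (diagIA w * ↑d) * ↑d⁻¹ := by rw [hinvmul]
        _ = diagIA w * (↑d * ↑d⁻¹) := mul_assoc _ _ _
        _ = diagIA w := by rw [Units.mul_inv, mul_one]
    refine ⟨fun x => (U x)⁻¹, ?_⟩
    refine RingEquiv.ext fun f => ?_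
    ext x y hxy
    rw [fracHom_apply, hconj f, hdinv, hd, mul_diag_apply, diag_mul_apply]
    have e1 : (((((U x)⁻¹ : (Subring.center R)ˣ)) : Subring.center R) : R) = w x := rfl
    have e2 : ((((((U y)⁻¹)⁻¹ : (Subring.center R)ˣ)) : Subring.center R) : R) = v y := by
      rw [inv_inv]; rfl
    rw [e1, e2]
  · rintro ⟨v, rfl⟩
    exact fracHom_isFracAut v

end IA2

section Ext
variable {X R : Type*} [PartialOrder X] [LocallyFiniteOrder X] [DecidableEq X] [Ring R]

/-- Extension by `1` at the base point. -/
def extHom (x0 : X) : ({x : X // x ≠ x0} → (Subring.center R)ˣ) →* (X → (Subring.center R)ˣ) where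
  toFun w := fun x => if h : x = x0 then 1 else w ⟨x, h⟩
  map_one' := funext fun x => by by_cases h : x = x0 <;> simp [h]
  map_mul' := fun a b => funext fun x => by by_cases h : x = x0 <;> simp [h]

lemma const_of_connected {A : Type*} {v : X → A} (hv : ∀ x y : X, x ≤ y → v x = v y)
    (hG : (compGraph X).Connected) (x y : X) : v x = v y := by
  obtain ⟨p⟩ := hG x y
  induction p with
  | nil => rfl
  | @cons a b c hadj p ih =>
    refine Eq.trans ?_ ih
    rcases (hadj : a < b ∨ b < a) with h | h
    · exact hv a b h.le
    · exact (hv b a h.le).symm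

lemma extHom_injective (x0 : X) (hG : (compGraph X).Connected) :
    Function.Injective ((fracHom (R := R) (X := X)).comp (extHom x0)) := by
  rw [injective_iff_map_eq_one]
  intro w hw
  have hedge : ∀ x y : X, x ≤ y → extHom (R := R) x0 w x = extHom x0 w y :=
    fun x y hxy => fracHom_eq_one_edge hw hxy
  have hconst : ∀ x : X, extHom (R := R) x0 w x = extHom x0 w x0 :=
    fun x => const_of_connected hedge hG x x0
  have hx0 : extHom (R := R) x0 w x0 = 1 := by simp [extHom]
  funext s
  have := (hconst s).trans hx0
  simpa [extHom, s.2] using this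
end Ext


/-- For a nonempty finite poset with connected comparability graph, the
fractional automorphisms form a subgroup of the automorphism group of the incidence
algebra, isomorphic to the direct product of `|X| - 1` copies of the group of invertible
central elements of `R` (Corollary 3.7). -/
theorem frac_aut_subgroup_iso {X R : Type*} [PartialOrder X] [Fintype X] [Nonempty X]
    [LocallyFiniteOrder X] [DecidableEq X] [Ring R]
    (hG : (compGraph X).Connected) :
    ∃ H : Subgroup (RingAut (IncidenceAlgebra R X)),
      (∀ φ : RingAut (IncidenceAlgebra R X), φ ∈ H ↔ IsFracAut φ) ∧
      Nonempty (H ≃* (Fin (Fintype.card X - 1) → (Subring.center R)ˣ)) := by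
  classical
  obtain ⟨x0⟩ := ‹Nonempty X›
  set Θ := (fracHom (R := R) (X := X)).comp (extHom x0) with hΘ
  refine ⟨Θ.range, fun φ => ?_, ?_⟩
  · constructor
    · rintro ⟨w, rfl⟩
      exact fracHom_isFracAut _
    · intro hφ
      obtain ⟨W, rfl⟩ := (isFracAut_iff φ).1 hφ
      refine ⟨fun s => W s * (W x0)⁻¹, ?_⟩
      have hext : extHom (R := R) x0 (fun s => W s * (W x0)⁻¹)
          = W * (fun _ => (W x0)⁻¹) := by
        funext x
        by_cases h : x = x0
        · subst h; simp [extHom]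
        · simp [extHom, h]
      show fracHom (extHom x0 fun s => W s * (W x0)⁻¹) = fracHom W
      rw [hext, map_mul, fracHom_const, mul_one]
  · have hinj := extHom_injective (R := R) x0 hG
    have e1 := MonoidHom.ofInjective hinj
    have hcard : Fintype.card {x : X // x ≠ x0} = Fintype.card X - 1 := by
      have := Fintype.card_subtype_compl (fun x : X => x = x0)
      simpa [Fintype.card_subtype_eq] using this
    have e2 : {x : X // x ≠ x0} ≃ Fin (Fintype.card X - 1) := Fintype.equivFinOfCardEq hcard
    exact ⟨e1.symm.trans (MulEquiv.arrowCongr e2 (MulEquiv.refl _))⟩
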